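/- Let q ∈ ℂ with q^m ≠ 1 for every positive integer m, let n ≥ 1, and let A, B be n×n complex matrices with A invertible and AB = qBA. Then B is nilpotent. -/

import Mathlib

open Polynomial Module

/-- A monic polynomial over an algebraically closed field all of whose roots are zero
is a power of `X`. -/
lemma monic_eq_X_pow_of_roots_zero {K : Type*} [Field K] [IsAlgClosed K]
    {p : K[X]} (hp : p.Monic) (h : ∀ r ∈ p.roots, r = 0) :
    p = X ^ p.natDegree := by
  have hs : p.Splits := IsAlgClosed.splits p
  have hprod := hs.eq_prod_roots_of_monic hp
  have hcard : Multiset.card p.roots = p.natDegree :=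
    IsAlgClosed.card_roots_eq_natDegree
  calc p = (p.roots.map fun a => X - C a).prod := hprod
    _ = (p.roots.map fun _ => (X : K[X])).prod := by
        apply congrArg
        apply Multiset.map_congr rfl
        intro r hr
        rw [h r hr, map_zero, sub_zero]
    _ = X ^ Multiset.card p.roots := by
        rw [Multiset.map_const', Multiset.prod_replicate]
    _ = X ^ p.natDegree := by rw [hcard]

/-- An endomorphism of a finite-dimensional vector space over an algebraically closed
field all of whose eigenvalues are zero is nilpotent. -/
lemma isNilpotent_of_eigenvalues_zero {K V : Type*} [Field K] [IsAlgClosed K]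
    [AddCommGroup V] [Module K V] [FiniteDimensional K V]
    (f : Module.End K V) (h : ∀ μ, f.HasEigenvalue μ → μ = 0) :
    IsNilpotent f := by
  set p := minpoly K f with hp
  have hmon : p.Monic := minpoly.monic (Algebra.IsIntegral.isIntegral (R := K) f)
  have hroots : ∀ r ∈ p.roots, r = 0 := by
    intro r hr
    have : p.IsRoot r := Polynomial.isRoot_of_mem_roots hr
    exact h r (Module.End.hasEigenvalue_iff_isRoot.mpr this)
  have hXpow : p = X ^ p.natDegree := monic_eq_X_pow_of_roots_zero hmon hroots
  refine ⟨p.natDegree, ?_⟩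
  have := minpoly.aeval K f
  rw [← hp, hXpow] at this
  simpa using this

/-- In a representation of the `q`-spinor `AB = qBA` with `q` not a root of
unity, if `A` is invertible then `B` is nilpotent. -/
theorem qspinor_invertible_implies_nilpotent
    (q : ℂ) (hq : ∀ m : ℕ, 0 < m → q ^ m ≠ 1)
    (n : ℕ) (hn : 1 ≤ n)
    (A B : Matrix (Fin n) (Fin n) ℂ)
    (hA : IsUnit A)
    (hAB : A * B = q • (B * A)) :
    IsNilpotent B := by
  obtain ⟨u, rfl⟩ := hA
  rcases eq_or_ne q 0 with rfl | hq0
  · have hB : B = 0 := by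
      have h0 : (↑u : Matrix (Fin n) (Fin n) ℂ) * B = 0 := by
        rw [hAB, zero_smul]
      calc B = (↑u⁻¹ : Matrix (Fin n) (Fin n) ℂ) * (↑u * B) := by
              rw [← mul_assoc, u.inv_mul, one_mul]
        _ = 0 := by rw [h0, mul_zero]
    rw [hB]; exact IsNilpotent.zero
  set f : Module.End ℂ (Fin n → ℂ) := Matrix.toLinAlgEquiv' B with hf
  -- key commutation : B * u⁻¹ = q • (u⁻¹ * B)
  have hkey : B * (↑u⁻¹ : Matrix (Fin n) (Fin n) ℂ) =
      q • ((↑u⁻¹ : Matrix (Fin n) (Fin n) ℂ) * B) := by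
    have h1 : (↑u⁻¹ : Matrix (Fin n) (Fin n) ℂ) * ((↑u : Matrix (Fin n) (Fin n) ℂ) * B) * (↑u⁻¹ : Matrix (Fin n) (Fin n) ℂ) = B * (↑u⁻¹ : Matrix (Fin n) (Fin n) ℂ) := by
      rw [← mul_assoc, u.inv_mul, one_mul]
    rw [hAB] at h1
    rw [← h1]
    rw [Matrix.mul_smul, Matrix.smul_mul]
    congr 1
    rw [mul_assoc, mul_assoc B, Units.mul_inv, mul_one]
  -- eigenvalues scale by q
  have hscale : ∀ μ : ℂ, f.HasEigenvalue μ → f.HasEigenvalue (q * μ) := by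
    intro μ hμ
    obtain ⟨v, hv⟩ := hμ.exists_hasEigenvector
    have hv0 : v ≠ 0 := hv.2
    have hfv : B.mulVec v = μ • v := hv.apply_eq_smul
    set w : Fin n → ℂ := (↑u⁻¹ : Matrix (Fin n) (Fin n) ℂ).mulVec v with hw
    have hw0 : w ≠ 0 := by
      intro h0
      apply hv0
      have : (↑u : Matrix (Fin n) (Fin n) ℂ).mulVec w = v := by
        rw [hw, Matrix.mulVec_mulVec, u.mul_inv, Matrix.one_mulVec]
      rw [← this, h0, Matrix.mulVec_zero]
    apply Module.End.hasEigenvalue_of_hasEigenvector (x := w)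
    constructor
    · rw [Module.End.mem_eigenspace_iff]
      show B.mulVec w = (q * μ) • w
      rw [hw, Matrix.mulVec_mulVec, hkey, Matrix.smul_mulVec,
        ← Matrix.mulVec_mulVec, hfv, Matrix.mulVec_smul, mul_smul]
    · exact hw0
  -- all eigenvalues are zero
  have hzero : ∀ μ : ℂ, f.HasEigenvalue μ → μ = 0 := by
    intro μ hμ
    by_contra hμ0
    have hmem : ∀ k : ℕ, f.HasEigenvalue (q ^ k * μ) := by
      intro k
      induction k with
      | zero => simpa using hμ
      | succ k ih =>
        have := hscale _ ih
        rwa [← mul_assoc, mul_comm q (q ^ k), ← pow_succ] at this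
    have hq0 : q ≠ 0 := hq0
    have hinj : Function.Injective (fun k : ℕ => q ^ k * μ) := by
      intro a b hab
      simp only [mul_eq_mul_right_iff, hμ0, or_false] at hab
      by_contra hne
      rcases Nat.lt_or_ge a b with h | h
      · have hpow : q ^ (b - a) = 1 := by
          have : q ^ a * q ^ (b - a) = q ^ a * 1 := by
            rw [mul_one, ← pow_add, Nat.add_sub_cancel' h.le, hab]
          exact mul_left_cancel₀ (pow_ne_zero a hq0) this
        exact hq (b - a) (Nat.sub_pos_of_lt h) hpow
      · have h' : b < a := lt_of_le_of_ne h (fun e => hne e.symm)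
        have hpow : q ^ (a - b) = 1 := by
          have : q ^ b * q ^ (a - b) = q ^ b * 1 := by
            rw [mul_one, ← pow_add, Nat.add_sub_cancel' h'.le, ← hab]
          exact mul_left_cancel₀ (pow_ne_zero b hq0) this
        exact hq (a - b) (Nat.sub_pos_of_lt h') hpow
    have hfin : Set.Finite f.HasEigenvalue := f.finite_hasEigenvalue
    exact Set.infinite_of_injective_forall_mem hinj hmem hfin
  have hnil : IsNilpotent f := isNilpotent_of_eigenvalues_zero f hzero
  have : B = Matrix.toLinAlgEquiv'.symm f := by rw [hf]; simp
  rw [this]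
  exact hnil.map _
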